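/- Empirical equivalence of MLE and Min-Max-IRL under deterministic dynamics (Theorem 1, part 1, empirical level): Suppose the dynamics are deterministic, i.e. P₀ = δ_{s̄} for some s̄ ∈ S and P_t(·|s,a) = δ_{f_t(s,a)} for measurable maps f_t : S×A → S, t = 1,…,T−1. Then for every bounded measurable reward r and every dynamically feasible trajectory τ = (s₁,a₁,…,s_T,a_T) (i.e. s₁ = s̄ and s_{t+1} = f_t(s_t,a_t) for t < T), the trajectory losses coincide: −β Σ_{t=1}^T log π*_{t,r}(a_t|s_t) = J*(r) − Σ_{t=1}^T r_t(s_t,a_t). Consequently, for any finite dataset of feasible trajectories τ¹,…,τⁿ, the empirical risks satisfy β · (1/n)Σ_{i=1}^n ( −Σ_{t=1}^T log π*_{t,r}(a_t^i|s_t^i) ) = J*(r) − (1/n)Σ_{i=1}^n Σ_{t=1}^T r_t(s_t^i,a_t^i) for every r. -/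

import Mathlib

open MeasureTheory ProbabilityTheory Real
open scoped ENNReal RealInnerProductSpace

noncomputable section

namespace IRL

variable {S A : Type*} [MeasurableSpace S] [MeasurableSpace A]

/-- A reward tuple `(r_t)` of bounded measurable functions. -/
def IsBddReward (r : ℕ → S → A → ℝ) : Prop :=
  ∀ t, Measurable (fun q : S × A => r t q.1 q.2) ∧ ∃ C, ∀ s a, |r t s a| ≤ C

/-- `p` is a family of `ν`-probability densities of a Markov policy. -/
def IsPolicyDensity (ν : Measure A) (p : ℕ → S → A → ℝ) : Prop :=
  (∀ t, Measurable (fun q : S × A => p t q.1 q.2)) ∧ (∀ t s a, 0 ≤ p t s a) ∧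
    (∀ t s, ∫ a, p t s a ∂ν = 1)

/-- the log-densities `log π_t` are bounded (in particular the densities are positive). -/
def HasBddLogDensity (p : ℕ → S → A → ℝ) : Prop :=
  ∀ t, (∀ s a, 0 < p t s a) ∧ ∃ C, ∀ s a, |Real.log (p t s a)| ≤ C

variable (T : ℕ) (P : ℕ → Kernel (S × A) S) (ν : Measure A)

/-- Soft-optimal value function `V*_{t,r}` (backward recursion, `V* t ≡ 0` for `t > T`). -/
def Vstar (β : ℝ) (r : ℕ → S → A → ℝ) (t : ℕ) (s : S) : ℝ :=
  if T < t then 0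
  else β * Real.log (∫ a, Real.exp ((r t s a + ∫ s', Vstar β r (t + 1) s' ∂(P t (s, a))) / β) ∂ν)
termination_by T + 1 - t
decreasing_by omega

/-- Soft-optimal state-action value `Q*_{t,r}`. -/
def Qstar (β : ℝ) (r : ℕ → S → A → ℝ) (t : ℕ) (s : S) (a : A) : ℝ :=
  r t s a + ∫ s', Vstar T P ν β r (t + 1) s' ∂(P t (s, a))

/-- `ν`-density of the soft-optimal policy `π*_r`. -/
def piStar (β : ℝ) (r : ℕ → S → A → ℝ) (t : ℕ) (s : S) (a : A) : ℝ :=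
  Real.exp ((Qstar T P ν β r t s a - Vstar T P ν β r t s) / β)

/-- Value function `V^π_{t,r}` of a policy given by densities `p` (with `β = 0` this is the
unregularized value function `V^{π,0}`). -/
def Vpol (β : ℝ) (p r : ℕ → S → A → ℝ) (t : ℕ) (s : S) : ℝ :=
  if T < t then 0
  else ∫ a,
    (r t s a + (∫ s', Vpol β p r (t + 1) s' ∂(P t (s, a))) - β * Real.log (p t s a)) * p t s a ∂ν
termination_by T + 1 - t
decreasing_by omega

/-- `Q^π_{t,r}` for a policy given by densities `p`. -/
def Qpol (β : ℝ) (p r : ℕ → S → A → ℝ) (t : ℕ) (s : S) (a : A) : ℝ :=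
  r t s a + ∫ s', Vpol T P ν β p r (t + 1) s' ∂(P t (s, a))

/-- Regularized advantage `A^π_{t,r}(s,a) = Q^π - V^π - β log π_t(a|s)`. -/
def Apol (β : ℝ) (p r : ℕ → S → A → ℝ) (t : ℕ) (s : S) (a : A) : ℝ :=
  Qpol T P ν β p r t s a - Vpol T P ν β p r t s - β * Real.log (p t s a)

variable (P0 : Measure S)

/-- Optimal value `J*(r) = ∫ V*_{1,r} dP₀`. -/
def Jstar (β : ℝ) (r : ℕ → S → A → ℝ) : ℝ := ∫ s, Vstar T P ν β r 1 s ∂P0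

/-- Expected (regularized) return `J(r,π)` of a density policy. -/
def Jpol (β : ℝ) (p r : ℕ → S → A → ℝ) : ℝ := ∫ s, Vpol T P ν β p r 1 s ∂P0

/-- Iterated expectation, from time `t` in state `s`, of a trajectory functional `g` under a
(kernel) Markov policy `π`; coordinates of the trajectory outside `{1,…,T}` are irrelevant
junk values. -/
def polExp [Nonempty S] [Nonempty A] (pol : ℕ → Kernel S A) (g : (ℕ → S × A) → ℝ) (t : ℕ)
    (s : S) : ℝ :=
  if T < t then g (fun _ => (Classical.arbitrary S, Classical.arbitrary A))
  else ∫ a, ∫ s', polExp pol (fun τ => g (Function.update τ t (s, a))) (t + 1) s' ∂(P t (s, a))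
    ∂(pol t s)
termination_by T + 1 - t
decreasing_by omega

/-- `μ` is the trajectory law `P^π` of the Markov policy `π` (with initial distribution `P₀`),
characterized through integrals of all bounded measurable trajectory functionals. -/
def IsTrajLaw [Nonempty S] [Nonempty A] (pol : ℕ → Kernel S A) (μ : Measure (ℕ → S × A)) : Prop :=
  IsProbabilityMeasure μ ∧
    ∀ g : (ℕ → S × A) → ℝ, Measurable g → (∃ C, ∀ τ, |g τ| ≤ C) →
      ∫ τ, g τ ∂μ = ∫ s, polExp T P pol g 1 s ∂P0

/-- The kernel `s ↦ p t s ⬝ ν` of a policy given by densities. -/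
def densKernel [IsFiniteMeasure ν] (p : ℕ → S → A → ℝ) (t : ℕ) : Kernel S A :=
  Kernel.withDensity (Kernel.const S ν) fun s a => ENNReal.ofReal (p t s a)

open Classical in
/-- Kullback–Leibler divergence `∫ log (dμ/dμ') dμ` if `μ ≪ μ'` (`∞` otherwise). -/
def KL {X : Type*} [MeasurableSpace X] (μ μ' : Measure X) : ℝ≥0∞ :=
  if μ ≪ μ' ∧ Integrable (fun x => Real.log (μ.rnDeriv μ' x).toReal) μ then
    ENNReal.ofReal (∫ x, Real.log (μ.rnDeriv μ' x).toReal ∂μ)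
  else ⊤

/-- Squared Hellinger distance, computed with the dominating measure `μ + μ'`. -/
def sqHellinger {X : Type*} [MeasurableSpace X] (μ μ' : Measure X) : ℝ :=
  ∫ x, (Real.sqrt ((μ.rnDeriv (μ + μ') x).toReal)
      - Real.sqrt ((μ'.rnDeriv (μ + μ') x).toReal)) ^ 2 ∂(μ + μ')

/-- Second directional derivative. -/
def D2 {E : Type*} [NormedAddCommGroup E] [NormedSpace ℝ E] (F : E → ℝ) (θ ξ ζ : E) : ℝ :=
  fderiv ℝ (fun x => fderiv ℝ F x ζ) θ ξ

/-- Third directional derivative. -/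
def D3 {E : Type*} [NormedAddCommGroup E] [NormedSpace ℝ E] (F : E → ℝ) (θ ξ ζ ω : E) : ℝ :=
  fderiv ℝ (fun x => D2 F x ζ ω) θ ξ

end IRL

open MeasureTheory ProbabilityTheory Real
open scoped ENNReal

section Aux

variable {S A : Type*} [MeasurableSpace S] [MeasurableSpace A]

lemma vstar_sm (T : ℕ) (f : ℕ → S → A → S) (hf : ∀ t, Measurable (fun q : S × A => f t q.1 q.2))
    (P : ℕ → Kernel (S × A) S)
    (hP : ∀ t, P t = Kernel.deterministic (fun q : S × A => f t q.1 q.2) (hf t))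
    (ν : Measure A) [IsFiniteMeasure ν] (β : ℝ) (r : ℕ → S → A → ℝ)
    (hr : IRL.IsBddReward r) :
    ∀ t, StronglyMeasurable (IRL.Vstar T P ν β r t) := by
  suffices H : ∀ k t, T + 1 - t ≤ k → StronglyMeasurable (IRL.Vstar T P ν β r t) by
    intro t; exact H (T + 1 - t) t le_rfl
  intro k
  induction k with
  | zero =>
    intro t ht
    have h : T < t := by omega
    have : IRL.Vstar T P ν β r t = fun _ => (0 : ℝ) := by
      funext s; rw [IRL.Vstar, if_pos h]
    rw [this]; exact stronglyMeasurable_const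
  | succ k ih =>
    intro t ht
    by_cases h : T < t
    · have : IRL.Vstar T P ν β r t = fun _ => (0 : ℝ) := by
        funext s; rw [IRL.Vstar, if_pos h]
      rw [this]; exact stronglyMeasurable_const
    · have h1 : StronglyMeasurable (IRL.Vstar T P ν β r (t + 1)) := ih (t + 1) (by omega)
      have key : ∀ s a, ∫ s', IRL.Vstar T P ν β r (t + 1) s' ∂(P t (s, a))
          = IRL.Vstar T P ν β r (t + 1) (f t s a) := by
        intro s a; rw [hP t]
        exact Kernel.integral_deterministic' (hf t) h1
      have heq : IRL.Vstar T P ν β r t = fun s => β * Real.log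
          (∫ a, Real.exp ((r t s a + IRL.Vstar T P ν β r (t + 1) (f t s a)) / β) ∂ν) := by
        funext s; rw [IRL.Vstar, if_neg h]
        simp only [key]
      rw [heq]
      have hm : StronglyMeasurable (fun q : S × A =>
          Real.exp ((r t q.1 q.2 + IRL.Vstar T P ν β r (t + 1) (f t q.1 q.2)) / β)) := by
        apply Measurable.stronglyMeasurable
        exact (((hr t).1.add (h1.measurable.comp (hf t))).div_const β).exp
      have hint : StronglyMeasurable (fun s =>
          ∫ a, Real.exp ((r t s a + IRL.Vstar T P ν β r (t + 1) (f t s a)) / β) ∂ν) :=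
        hm.integral_prod_right'
      exact (measurable_const.mul hint.measurable.log).stronglyMeasurable

lemma traj_identity (T : ℕ) (hT : 1 ≤ T)
    (sbar : S) (f : ℕ → S → A → S) (hf : ∀ t, Measurable (fun q : S × A => f t q.1 q.2))
    (P0 : Measure S) (hP0 : P0 = Measure.dirac sbar)
    (P : ℕ → Kernel (S × A) S)
    (hP : ∀ t, P t = Kernel.deterministic (fun q : S × A => f t q.1 q.2) (hf t))
    (ν : Measure A) [IsFiniteMeasure ν]
    (β : ℝ) (hβ : 0 < β)
    (r : ℕ → S → A → ℝ) (hr : IRL.IsBddReward r)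
    (τ : ℕ → S × A) (h1 : (τ 1).1 = sbar)
    (hstep : ∀ t, 1 ≤ t → t < T → (τ (t + 1)).1 = f t (τ t).1 (τ t).2) :
    -β * ∑ t ∈ Finset.Icc 1 T, Real.log (IRL.piStar T P ν β r t (τ t).1 (τ t).2)
      = IRL.Jstar T P ν P0 β r - ∑ t ∈ Finset.Icc 1 T, r t (τ t).1 (τ t).2 := by
  set g : ℕ → ℝ := fun t => IRL.Vstar T P ν β r t (τ t).1 with hg
  have hgT1 : g (T + 1) = 0 := by
    simp only [hg]; rw [IRL.Vstar, if_pos (by omega)]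
  have hsm := vstar_sm T f hf P hP ν β r hr
  have hterm : ∀ t ∈ Finset.Icc 1 T,
      -β * Real.log (IRL.piStar T P ν β r t (τ t).1 (τ t).2)
        = g t - r t (τ t).1 (τ t).2 - g (t + 1) := by
    intro t htmem
    rw [Finset.mem_Icc] at htmem
    have hQ : IRL.Qstar T P ν β r t (τ t).1 (τ t).2
        = r t (τ t).1 (τ t).2 + IRL.Vstar T P ν β r (t + 1) (f t (τ t).1 (τ t).2) := by
      rw [IRL.Qstar, hP t, Kernel.integral_deterministic' (hf t) (hsm (t + 1))]
    have hV1 : IRL.Vstar T P ν β r (t + 1) (f t (τ t).1 (τ t).2) = g (t + 1) := by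
      rcases lt_or_eq_of_le htmem.2 with hlt | heqT
      · simp only [hg]; rw [hstep t htmem.1 hlt]
      · subst heqT
        rw [hgT1, IRL.Vstar, if_pos (by omega)]
    rw [IRL.piStar, Real.log_exp, hQ, hV1]
    field_simp
    ring
  rw [Finset.mul_sum, Finset.sum_congr rfl hterm]
  have h2 : ∑ t ∈ Finset.Icc 1 T, (g t - g (t + 1)) = g 1 := by
    rw [← Finset.Ico_add_one_right_eq_Icc, Finset.sum_Ico_eq_sum_range]
    have htel := Finset.sum_range_sub' (fun i => g (1 + i)) (T + 1 - 1)
    simp only [Nat.add_sub_cancel] at htel ⊢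
    calc ∑ i ∈ Finset.range T, (g (1 + i) - g (1 + i + 1))
        = g (1 + 0) - g (1 + T) := htel
      _ = g 1 - g (T + 1) := by rw [Nat.add_comm 1 T]
      _ = g 1 := by rw [hgT1, sub_zero]
  have hJ : IRL.Jstar T P ν P0 β r = g 1 := by
    rw [IRL.Jstar, hP0, integral_dirac' _ _ (hsm 1)]
    simp only [hg, h1]
  calc ∑ t ∈ Finset.Icc 1 T, (g t - r t (τ t).1 (τ t).2 - g (t + 1))
      = ∑ t ∈ Finset.Icc 1 T, ((g t - g (t + 1)) - r t (τ t).1 (τ t).2) := by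
        apply Finset.sum_congr rfl; intro t _; ring
    _ = ∑ t ∈ Finset.Icc 1 T, (g t - g (t + 1))
        - ∑ t ∈ Finset.Icc 1 T, r t (τ t).1 (τ t).2 := Finset.sum_sub_distrib _ _
    _ = IRL.Jstar T P ν P0 β r - ∑ t ∈ Finset.Icc 1 T, r t (τ t).1 (τ t).2 := by
        rw [h2, hJ]

end Aux


/-- **Empirical equivalence of MLE and Min-Max-IRL under deterministic dynamics**
(Theorem 1, part 1, empirical level). Under deterministic dynamics (`P₀ = δ_{s̄}`,
`P_t(·|s,a) = δ_{f_t(s,a)}`), for every bounded measurable reward `r` and every dynamically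
feasible trajectory, the trajectory losses coincide:
`−β Σ_t log π*_{t,r}(a_t|s_t) = J*(r) − Σ_t r_t(s_t,a_t)`; consequently the empirical risks of
MLE and Min-Max-IRL agree (up to the factor `β`) on any finite dataset of feasible
trajectories. -/
theorem mle_minmax_irl_empirical_equivalence_deterministic
    {S A : Type*} [MeasurableSpace S] [MeasurableSpace A]
    (T : ℕ) (hT : 1 ≤ T)
    (sbar : S) (f : ℕ → S → A → S) (hf : ∀ t, Measurable (fun q : S × A => f t q.1 q.2))
    (P0 : Measure S) (hP0 : P0 = Measure.dirac sbar)
    (P : ℕ → Kernel (S × A) S)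
    (hP : ∀ t, P t = Kernel.deterministic (fun q : S × A => f t q.1 q.2) (hf t))
    (ν : Measure A) [IsFiniteMeasure ν] (hν : ν Set.univ ≠ 0)
    (β : ℝ) (hβ : 0 < β)
    (r : ℕ → S → A → ℝ) (hr : IRL.IsBddReward r) :
    -- trajectory-level identity on feasible trajectories
    (∀ τ : ℕ → S × A, (τ 1).1 = sbar →
      (∀ t, 1 ≤ t → t < T → (τ (t + 1)).1 = f t (τ t).1 (τ t).2) →
      -β * ∑ t ∈ Finset.Icc 1 T, Real.log (IRL.piStar T P ν β r t (τ t).1 (τ t).2)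
        = IRL.Jstar T P ν P0 β r - ∑ t ∈ Finset.Icc 1 T, r t (τ t).1 (τ t).2) ∧
    -- consequently the empirical risks agree on any dataset of feasible trajectories
    (∀ n : ℕ, 1 ≤ n → ∀ D : Fin n → (ℕ → S × A),
      (∀ i, (D i 1).1 = sbar ∧
        ∀ t, 1 ≤ t → t < T → (D i (t + 1)).1 = f t (D i t).1 (D i t).2) →
      β * ((n : ℝ)⁻¹ * ∑ i : Fin n,
          (- ∑ t ∈ Finset.Icc 1 T, Real.log (IRL.piStar T P ν β r t (D i t).1 (D i t).2)))
        = IRL.Jstar T P ν P0 β r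
          - (n : ℝ)⁻¹ * ∑ i : Fin n, ∑ t ∈ Finset.Icc 1 T, r t (D i t).1 (D i t).2) := by
  constructor
  · intro τ h1 hstep
    exact traj_identity T hT sbar f hf P0 hP0 P hP ν β hβ r hr τ h1 hstep
  · intro n hn D hD
    have hnne : (n : ℝ) ≠ 0 := by positivity
    have hone : ∀ i : Fin n,
        β * (-∑ t ∈ Finset.Icc 1 T, Real.log (IRL.piStar T P ν β r t (D i t).1 (D i t).2))
          = IRL.Jstar T P ν P0 β r - ∑ t ∈ Finset.Icc 1 T, r t (D i t).1 (D i t).2 := by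
      intro i
      have := traj_identity T hT sbar f hf P0 hP0 P hP ν β hβ r hr (D i)
        (hD i).1 (hD i).2
      linarith [this]
    calc β * ((n : ℝ)⁻¹ * ∑ i : Fin n,
          (-∑ t ∈ Finset.Icc 1 T, Real.log (IRL.piStar T P ν β r t (D i t).1 (D i t).2)))
        = (n : ℝ)⁻¹ * (β * ∑ i : Fin n,
          (-∑ t ∈ Finset.Icc 1 T, Real.log (IRL.piStar T P ν β r t (D i t).1 (D i t).2))) := by
          ring
      _ = (n : ℝ)⁻¹ * ∑ i : Fin n,
          (β * (-∑ t ∈ Finset.Icc 1 T, Real.log (IRL.piStar T P ν β r t (D i t).1 (D i t).2))) := by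
          rw [Finset.mul_sum]
      _ = (n : ℝ)⁻¹ * ∑ i : Fin n,
          (IRL.Jstar T P ν P0 β r - ∑ t ∈ Finset.Icc 1 T, r t (D i t).1 (D i t).2) := by
          rw [Finset.sum_congr rfl (fun i _ => hone i)]
      _ = IRL.Jstar T P ν P0 β r
          - (n : ℝ)⁻¹ * ∑ i : Fin n, ∑ t ∈ Finset.Icc 1 T, r t (D i t).1 (D i t).2 := by
          rw [Finset.sum_sub_distrib, Finset.sum_const, Finset.card_univ, Fintype.card_fin]
          field_simp
          ring
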